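/- For every integer N ≥ 1, every κ ∈ ℕ, and every w ∈ ℂ, one has | Σ_{ν=0}^N binom(N, ν) ((1−w)/2)^ν ((1+w)/2)^{N−ν} (1 − 2ν/N)^κ | ≤ (max(1, |w|))^κ. -/

import Mathlib

open Finset

lemma factor_bound (w : ℂ) (m : ℕ) :
    ‖(1 - w) / 2 * (-1 : ℂ) ^ m + (1 + w) / 2‖ ≤ max 1 ‖w‖ ^ m := by
  have hM1 : (1 : ℝ) ≤ max 1 ‖w‖ := le_max_left _ _
  rcases Nat.even_or_odd m with h | h
  · rw [h.neg_one_pow]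
    have : (1 - w) / 2 * 1 + (1 + w) / 2 = 1 := by ring
    rw [this, norm_one]
    exact one_le_pow₀ hM1
  · rw [h.neg_one_pow]
    have : (1 - w) / 2 * (-1) + (1 + w) / 2 = w := by ring
    rw [this]
    calc ‖w‖ ≤ max 1 ‖w‖ := le_max_right _ _
      _ ≤ max 1 ‖w‖ ^ m := le_self_pow₀ hM1 h.pos.ne'

lemma step_subsets (N : ℕ) (a b : ℂ) (g : ℕ → ℂ) :
    ∑ ν ∈ Finset.range (N + 1), (N.choose ν : ℂ) * a ^ ν * b ^ (N - ν) * g ν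
      = ∑ s : Finset (Fin N), a ^ s.card * b ^ (N - s.card) * g s.card := by
  rw [← Finset.powerset_univ, Finset.sum_powerset_apply_card
      (fun m => a ^ m * b ^ (N - m) * g m)]
  simp only [Finset.card_univ, Fintype.card_fin, nsmul_eq_mul]
  refine Finset.sum_congr rfl fun ν _ => by ring

lemma step_prod (N : ℕ) (a b : ℂ) (s : Finset (Fin N)) :
    a ^ s.card * b ^ (N - s.card) = ∏ i : Fin N, (if i ∈ s then a else b) := by
  rw [Finset.prod_ite, Finset.prod_const, Finset.prod_const]
  have h1 : Finset.univ.filter (· ∈ s) = s := by ext i; simp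
  have h2 : Finset.univ.filter (¬ · ∈ s) = sᶜ := by ext i; simp
  rw [h1, h2, Finset.card_compl, Fintype.card_fin]

lemma step_sum (N : ℕ) (hN : 1 ≤ N) (s : Finset (Fin N)) :
    (1 : ℂ) - 2 * s.card / N = (∑ i : Fin N, (if i ∈ s then (-1 : ℂ) else 1)) / N := by
  rw [Finset.sum_ite, Finset.sum_const, Finset.sum_const]
  have h1 : Finset.univ.filter (· ∈ s) = s := by ext i; simp
  have h2 : Finset.univ.filter (¬ · ∈ s) = sᶜ := by ext i; simp
  have hle : s.card ≤ N := by simpa using Finset.card_le_univ s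
  have hNc : (N : ℂ) ≠ 0 := Nat.cast_ne_zero.mpr (by omega)
  rw [h1, h2, Finset.card_compl, Fintype.card_fin, nsmul_eq_mul, nsmul_eq_mul,
    Nat.cast_sub hle]
  field_simp
  ring

lemma step_perj (N κ : ℕ) (a b : ℂ) (j : Fin κ → Fin N) :
    ∑ s : Finset (Fin N),
        (∏ i : Fin N, (if i ∈ s then a else b)) *
          ∏ k : Fin κ, (if j k ∈ s then (-1 : ℂ) else 1)
      = ∏ i : Fin N, (a * (-1 : ℂ) ^ (Finset.univ.filter (fun k => j k = i)).card + b) := by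
  have h1 : ∀ s : Finset (Fin N),
      (∏ k : Fin κ, (if j k ∈ s then (-1 : ℂ) else 1))
        = ∏ i : Fin N, (if i ∈ s then (-1 : ℂ) else 1)
            ^ (Finset.univ.filter (fun k => j k = i)).card := by
    intro s
    rw [← Finset.prod_fiberwise_of_maps_to (fun k _ => Finset.mem_univ (j k))
        (fun k => if j k ∈ s then (-1 : ℂ) else 1)]
    refine Finset.prod_congr rfl fun i _ => ?_
    rw [← Finset.prod_const]
    refine Finset.prod_congr rfl fun k hk => ?_
    rw [(Finset.mem_filter.mp hk).2]
  have h2 : ∀ s : Finset (Fin N),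
      (∏ i : Fin N, (if i ∈ s then a else b)) *
          ∏ k : Fin κ, (if j k ∈ s then (-1 : ℂ) else 1)
        = ∏ i : Fin N, (if i ∈ s
            then a * (-1 : ℂ) ^ (Finset.univ.filter (fun k => j k = i)).card else b) := by
    intro s
    rw [h1 s, ← Finset.prod_mul_distrib]
    refine Finset.prod_congr rfl fun i _ => ?_
    split_ifs <;> simp
  simp only [h2]
  rw [Finset.prod_add]
  rw [← Finset.powerset_univ, Finset.sum_congr rfl (fun s _ => ?_)]
  rw [Finset.prod_ite, Finset.prod_const]
  have hh1 : Finset.univ.filter (· ∈ s) = s := by ext i; simp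
  have hh2 : Finset.univ.filter (¬ · ∈ s) = sᶜ := by ext i; simp
  rw [hh1, hh2, Finset.compl_eq_univ_sdiff, Finset.prod_const]

/-- Bound for the Bernstein polynomial of the monomial `t ↦ t^κ` at a complex point `w`:
`|𝔹_{(·)^κ}^N(w)| ≤ (max(1,|w|))^κ`. -/
theorem statement_2 (N : ℕ) (hN : 1 ≤ N) (κ : ℕ) (w : ℂ) :
    ‖∑ ν ∈ Finset.range (N + 1), (N.choose ν : ℂ) * ((1 - w) / 2) ^ ν *
        ((1 + w) / 2) ^ (N - ν) * ((1 : ℂ) - 2 * (ν : ℂ) / (N : ℂ)) ^ κ‖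
      ≤ max 1 ‖w‖ ^ κ := by
  set M := max 1 ‖w‖ with hM
  have hM1 : (1 : ℝ) ≤ M := le_max_left _ _
  have hNc : (N : ℂ) ≠ 0 := Nat.cast_ne_zero.mpr (by omega)
  set F : (Fin κ → Fin N) → ℂ := fun j => ∏ i : Fin N,
      ((1 - w) / 2 * (-1 : ℂ) ^ (Finset.univ.filter (fun k => j k = i)).card + (1 + w) / 2)
    with hF
  have key : ∑ ν ∈ Finset.range (N + 1), (N.choose ν : ℂ) * ((1 - w) / 2) ^ ν *
        ((1 + w) / 2) ^ (N - ν) * ((1 : ℂ) - 2 * (ν : ℂ) / (N : ℂ)) ^ κ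
      = (∑ j : Fin κ → Fin N, F j) / (N : ℂ) ^ κ := by
    rw [step_subsets N ((1 - w) / 2) ((1 + w) / 2)
      (fun ν => ((1 : ℂ) - 2 * (ν : ℂ) / (N : ℂ)) ^ κ)]
    have hterm : ∀ s : Finset (Fin N),
        ((1 - w) / 2) ^ s.card * ((1 + w) / 2) ^ (N - s.card) *
            ((1 : ℂ) - 2 * (s.card : ℂ) / (N : ℂ)) ^ κ
          = (∑ j : Fin κ → Fin N, (∏ i : Fin N, (if i ∈ s then (1 - w) / 2 else (1 + w) / 2)) *
              ∏ k : Fin κ, (if j k ∈ s then (-1 : ℂ) else 1)) / (N : ℂ) ^ κ := by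
      intro s
      rw [step_prod, step_sum N hN, div_pow, Fintype.sum_pow, ← Finset.mul_sum,
        mul_div_assoc]
    rw [Finset.sum_congr rfl fun s _ => hterm s, ← Finset.sum_div, Finset.sum_comm]
    congr 1
    exact Finset.sum_congr rfl fun j _ => step_perj N κ ((1 - w) / 2) ((1 + w) / 2) j
  have hFj : ∀ j : Fin κ → Fin N, ‖F j‖ ≤ M ^ κ := by
    intro j
    have hsum : ∑ i : Fin N, (Finset.univ.filter (fun k => j k = i)).card = κ := by
      have := Finset.card_eq_sum_card_fiberwise (f := j)
        (s := (Finset.univ : Finset (Fin κ))) (t := Finset.univ)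
        (fun k _ => Finset.mem_univ (j k))
      simpa using this.symm
    rw [hF, norm_prod]
    calc ∏ i : Fin N, ‖(1 - w) / 2 * (-1 : ℂ) ^ (Finset.univ.filter (fun k => j k = i)).card
            + (1 + w) / 2‖
        ≤ ∏ i : Fin N, M ^ (Finset.univ.filter (fun k => j k = i)).card :=
          Finset.prod_le_prod (fun _ _ => norm_nonneg _) (fun i _ => factor_bound w _)
      _ = M ^ κ := by rw [Finset.prod_pow_eq_pow_sum, hsum]
  rw [key]
  have hNR : (0 : ℝ) < (N : ℝ) ^ κ := by positivity
  rw [norm_div, norm_pow, Complex.norm_natCast, div_le_iff₀ hNR]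
  calc ‖∑ j : Fin κ → Fin N, F j‖ ≤ ∑ j : Fin κ → Fin N, ‖F j‖ := norm_sum_le _ _
    _ ≤ ∑ _j : Fin κ → Fin N, M ^ κ := Finset.sum_le_sum fun j _ => hFj j
    _ = (N : ℝ) ^ κ * M ^ κ := by
        rw [Finset.sum_const, Finset.card_univ, nsmul_eq_mul]
        simp [mul_comm]
    _ = M ^ κ * (N : ℝ) ^ κ := by ring
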